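/- Let A ⊆ ℝ be open and invex w.r.t. η satisfying Condition C, a, b ∈ A with a < a + η(b,a), and let g : A → [0,∞) be preinvex and integrable on [a, a+η(b,a)]. Then (1/η(b,a)) ∫_a^{a+η(b,a)} g(u) du ≤ (g(a) + g(a + η(b,a)))/2. -/

import Mathlib

open MeasureTheory intervalIntegral Set

theorem hermite_hadamard_right_preinvex
    (A : Set ℝ) (η : ℝ → ℝ → ℝ) (a b : ℝ) (g : ℝ → ℝ)
    (hA : IsOpen A)
    (hinv : ∀ x ∈ A, ∀ y ∈ A, ∀ t ∈ Icc (0:ℝ) 1, x + t * η y x ∈ A)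
    (hC : ∀ x ∈ A, ∀ y ∈ A, ∀ t ∈ Icc (0:ℝ) 1,
      η y (y + t * η x y) = -t * η x y ∧ η x (y + t * η x y) = (1 - t) * η x y)
    (ha : a ∈ A) (hb : b ∈ A) (hab : a < a + η b a)
    (hg0 : ∀ x ∈ A, 0 ≤ g x)
    (hpre : ∀ x ∈ A, ∀ y ∈ A, ∀ t ∈ Icc (0:ℝ) 1,
      g (x + t * η y x) ≤ (1 - t) * g x + t * g y)
    (hint : IntervalIntegrable g volume a (a + η b a)) :
    (1 / η b a) * ∫ u in a..(a + η b a), g u ≤ (g a + g (a + η b a)) / 2 := by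
  set L := η b a with hLdef
  have hL : 0 < L := by linarith
  have hcA : a + L ∈ A := by
    have := hinv a ha b hb 1 ⟨zero_le_one, le_refl 1⟩
    simpa using this
  -- η a (a + L) = -L
  have hηa : η a (a + L) = -L := by
    have := (hC b hb a ha 1 ⟨zero_le_one, le_refl 1⟩).1
    simpa [hLdef] using this
  -- key pointwise inequality
  have hkey : ∀ t ∈ Icc (0:ℝ) 1, g (a + t * L) ≤ (1 - t) * g a + t * g (a + L) := by
    intro t ht
    have hs : (1 - t) ∈ Icc (0:ℝ) 1 := ⟨by linarith [ht.2], by linarith [ht.1]⟩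
    have h := hpre (a + L) hcA a ha (1 - t) hs
    have he : a + L + (1 - t) * η a (a + L) = a + t * L := by
      rw [hηa]; ring
    rw [he] at h
    calc g (a + t * L) ≤ (1 - (1 - t)) * g (a + L) + (1 - t) * g a := h
      _ = (1 - t) * g a + t * g (a + L) := by ring
  -- integrability of the reparametrized function
  have hi0 : IntervalIntegrable (fun x => g (x + a)) volume 0 L := by
    have := hint.comp_add_right a
    simpa using this
  have hi1 : IntervalIntegrable (fun x => g (L * x + a)) volume 0 1 := by
    have := hi0.comp_mul_left (c := L)
    have hne : L ≠ 0 := ne_of_gt hL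
    simpa [hne] using this
  -- change of variables
  have hcv : (∫ x in (0:ℝ)..1, g (L * x + a)) = L⁻¹ * ∫ u in a..(a + L), g u := by
    rw [integral_comp_mul_add g (ne_of_gt hL) a]
    norm_num [smul_eq_mul, add_comm]
  -- bound the reparametrized integral
  have hmono : (∫ x in (0:ℝ)..1, g (L * x + a))
      ≤ ∫ x in (0:ℝ)..1, ((1 - x) * g a + x * g (a + L)) := by
    apply intervalIntegral.integral_mono_on zero_le_one hi1
    · apply IntervalIntegrable.add
      · exact (IntervalIntegrable.sub intervalIntegrable_const intervalIntegral.intervalIntegrable_id).mul_const _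
      · exact intervalIntegral.intervalIntegrable_id.mul_const _
    · intro t ht
      have := hkey t ht
      simpa [mul_comm L t, add_comm] using this
  have hval : (∫ x in (0:ℝ)..1, ((1 - x) * g a + x * g (a + L)))
      = (g a + g (a + L)) / 2 := by
    have h1 : (∫ x in (0:ℝ)..1, ((1 - x) * g a + x * g (a + L)))
        = ∫ x in (0:ℝ)..1, (g a + x * (g (a + L) - g a)) := by
      congr 1; funext x; ring
    rw [h1]
    rw [intervalIntegral.integral_add intervalIntegrable_const
      (intervalIntegral.intervalIntegrable_id.mul_const _)]
    simp [intervalIntegral.integral_mul_const, integral_id]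
    ring
  have : L⁻¹ * (∫ u in a..(a + L), g u) ≤ (g a + g (a + L)) / 2 := by
    rw [← hcv]; rw [← hval]; exact hmono
  simpa [one_div] using this
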